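/- arXiv:2602.11080 — 2 statements merged into one kernel-verified Lean document; each statement's English description precedes it below -/
import Mathlib

section
/- For every d×d real orthogonal matrix S there exists a signature matrix Z (a diagonal matrix with each diagonal entry equal to +1 or -1) and a real skew-symmetric matrix A whose entries all lie in the closed interval [-1, 1], such that I + SZ is invertible and SZ = (I - A)(I + A)⁻¹. -/
open Matrix

variable {n : Type*} [Fintype n] [DecidableEq n]

lemma det_updateColumn_finset_sum (M : Matrix n n ℝ) (j : n) {α : Type*} (t : Finset α)
    (g : α → n → ℝ) :
    det (M.updateCol j (∑ a ∈ t, g a)) = ∑ a ∈ t, det (M.updateCol j (g a)) := by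
  classical
  induction t using Finset.induction_on with
  | empty =>
      rw [Finset.sum_empty, Finset.sum_empty]
      exact det_eq_zero_of_column_eq_zero j (fun i => by simp)
  | @insert a t ha ih =>
      rw [Finset.sum_insert ha, det_updateCol_add, ih, Finset.sum_insert ha]

lemma det_expand_col (M : Matrix n n ℝ) (j : n) (v : n → ℝ) :
    det (M.updateCol j v)
      = ∑ l, v l * det (M.updateCol j (fun k => if l = k then (1:ℝ) else 0)) := by
  conv_lhs => rw [pi_eq_sum_univ v, det_updateColumn_finset_sum]
  exact Finset.sum_congr rfl fun l _ => det_updateCol_smul M j (v l) _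

lemma updateColumn_comm' (M : Matrix n n ℝ) {i j : n} (hij : i ≠ j) (u v : n → ℝ) :
    (M.updateCol i u).updateCol j v = (M.updateCol j v).updateCol i u := by
  ext k m
  rcases eq_or_ne m j with rfl | hmj
  · rw [updateCol_self, updateCol_ne hij.symm, updateCol_self]
  · rcases eq_or_ne m i with rfl | hmi
    · rw [updateCol_ne hmj, updateCol_self, updateCol_self]
    · rw [updateCol_ne hmj, updateCol_ne hmi, updateCol_ne hmi, updateCol_ne hmj]

lemma det_single_single {i j k l : n} (hij : i ≠ j) :
    det (((1 : Matrix n n ℝ).updateCol i fun m => if k = m then (1:ℝ) else 0).updateCol j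
        fun m => if l = m then (1:ℝ) else 0)
      = (if k = i ∧ l = j then (1:ℝ) else 0) - (if k = j ∧ l = i then (1:ℝ) else 0) := by
  rcases eq_or_ne l k with rfl | hlk
  · -- columns i and j are equal
    rw [det_zero_of_column_eq hij (fun m => by
      rw [updateCol_ne hij, updateCol_self, updateCol_self])]
    simp only [and_comm]
    ring
  · rcases eq_or_ne k i with rfl | hki
    · rcases eq_or_ne l j with rfl | hlj
      · -- identity matrix
        have h1 : (fun m => if k = m then (1:ℝ) else 0)
            = fun m => (1 : Matrix n n ℝ) m k := by ext m; simp [one_apply, eq_comm]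
        have h2 : (fun m => if l = m then (1:ℝ) else 0)
            = fun m => ((1 : Matrix n n ℝ).updateCol k fun m => (1 : Matrix n n ℝ) m k) m l :=
          by ext m; simp [one_apply, eq_comm, updateCol_ne hij.symm]
        rw [h1, h2, updateCol_eq_self, updateCol_eq_self, det_one]
        simp [hij, hij.symm]
      · -- column j equals column l, l ∉ {i, j}
        rw [det_zero_of_column_eq (show j ≠ l from fun h => hlj h.symm) (fun m => by
          rw [updateCol_self, updateCol_ne (fun h : l = j => hlj h),
            updateCol_ne (fun h : l = k => hlk h), one_apply]
          simp [eq_comm])]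
        simp [hlj, fun h : k = j => hij h]
    · rcases eq_or_ne k j with rfl | hkj
      · rcases eq_or_ne l i with rfl | hli
        · -- swap matrix: here j = k and i = l
          set T := (((1 : Matrix n n ℝ).updateCol l fun m => if k = m then (1:ℝ) else 0).updateCol
              k fun m => if l = m then (1:ℝ) else 0) with hT
          have hTt : Tᵀ = fun r => (1 : Matrix n n ℝ) (Equiv.swap l k r) := by
            ext r m
            rcases eq_or_ne r l with rfl | hrl
            · simp [hT, transpose_apply, updateCol_ne hij, updateCol_self,
                Equiv.swap_apply_left, one_apply]
            · rcases eq_or_ne r k with rfl | hrk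
              · simp [hT, transpose_apply, updateCol_self, Equiv.swap_apply_right, one_apply]
              · simp [hT, transpose_apply, updateCol_ne hrl, updateCol_ne hrk,
                  Equiv.swap_apply_of_ne_of_ne hrl hrk, one_apply, eq_comm]
          have h1 : det T = det Tᵀ := (det_transpose T).symm
          rw [h1, hTt]
          have h2 := (detRowAlternating : (n → ℝ) [⋀^n]→ₗ[ℝ] ℝ).map_swap
            (fun r => (1 : Matrix n n ℝ) r) hij
          rw [show Matrix.det (fun r => (1 : Matrix n n ℝ) (Equiv.swap l k r))
              = (detRowAlternating : (n → ℝ) [⋀^n]→ₗ[ℝ] ℝ)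
                ((fun r => (1 : Matrix n n ℝ) r) ∘ Equiv.swap l k) from rfl, h2]
          have h3 : (detRowAlternating : (n → ℝ) [⋀^n]→ₗ[ℝ] ℝ) (fun r => (1 : Matrix n n ℝ) r)
              = det (1 : Matrix n n ℝ) := rfl
          rw [h3, det_one]
          simp [hij.symm, hki]
        · -- l ∉ {i, j = k}
          rw [det_zero_of_column_eq (show k ≠ l from fun h => hlk h.symm) (fun m => by
            rw [updateCol_self, updateCol_ne (fun h : l = k => hlk h),
              updateCol_ne (fun h : l = i => hli h), one_apply]
            simp [eq_comm])]
          simp [hki, hli]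
      · -- k ∉ {i, j} : column i equals column k
        rw [det_zero_of_column_eq (show i ≠ k from fun h => hki h.symm) (fun m => by
          rw [updateCol_ne hij, updateCol_self,
            updateCol_ne (fun h : k = j => hkj h), updateCol_ne (fun h : k = i => hki h),
            one_apply]
          simp [eq_comm])]
        simp [hki, hkj]

lemma det_two_updates {i j : n} (hij : i ≠ j) (u v : n → ℝ) :
    det (((1 : Matrix n n ℝ).updateCol i u).updateCol j v)
      = u i * v j - u j * v i := by
  rw [det_expand_col]
  have key : ∀ l, det (((1 : Matrix n n ℝ).updateCol i u).updateCol j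
      (fun k => if l = k then (1:ℝ) else 0))
      = ∑ k, u k * ((if k = i ∧ l = j then (1:ℝ) else 0) - (if k = j ∧ l = i then (1:ℝ) else 0)) := by
    intro l
    rw [updateColumn_comm' _ hij, det_expand_col]
    refine Finset.sum_congr rfl fun k _ => ?_
    rw [updateColumn_comm' _ hij.symm, det_single_single hij]
  simp only [key, Finset.mul_sum, mul_sub, mul_ite, mul_one, mul_zero, ite_and]
  rw [Finset.sum_comm]
  simp [Finset.sum_ite_eq', Finset.sum_sub_distrib, hij, hij.symm]
  ring

/-- For every real orthogonal matrix `S`, there exist a signature matrix `Z` (diagonal with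
`±1` diagonal entries) and a real skew-symmetric matrix `A` whose entries lie in `[-1, 1]`
such that `I + SZ` is invertible and `SZ = (I - A)(I + A)⁻¹`. -/
theorem cayley_repr_with_signature {d : ℕ} (S : Matrix (Fin d) (Fin d) ℝ)
    (hS : Sᵀ * S = 1) :
    ∃ Z A : Matrix (Fin d) (Fin d) ℝ,
      (∀ i, Z i i = 1 ∨ Z i i = -1) ∧ (∀ i j, i ≠ j → Z i j = 0) ∧
      Aᵀ = -A ∧ (∀ i j, A i j ∈ Set.Icc (-1 : ℝ) 1) ∧
      IsUnit (1 + S * Z) ∧ S * Z = (1 - A) * (1 + A)⁻¹ := by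
  classical
  set sgn : Bool → ℝ := fun b => if b then 1 else -1 with hsgn
  set N : (Fin d → ℝ) → Matrix (Fin d) (Fin d) ℝ := fun z => 1 + S * diagonal z with hNdef
  -- determinant as alternating map of the rows of the transpose
  have hdetN : ∀ z : Fin d → ℝ, det (N z)
      = (detRowAlternating : (Fin d → ℝ) [⋀^Fin d]→ₗ[ℝ] ℝ)
        (fun j => fun i => (if i = j then (1:ℝ) else 0) + S i j * z j) := by
    intro z
    rw [← det_transpose]
    congr 1
    ext j i
    simp [hNdef, transpose_apply, Matrix.add_apply, one_apply, mul_diagonal]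
  -- the sum over all sign patterns equals 2^d
  have hsum : ∑ r : Fin d → Bool, det (N (fun j => sgn (r j))) = 2 ^ d := by
    have := (detRowAlternating : (Fin d → ℝ) [⋀^Fin d]→ₗ[ℝ] ℝ).toMultilinearMap.map_sum
      (g := fun j (b : Bool) => fun i => (if i = j then (1:ℝ) else 0) + S i j * sgn b)
    simp only [AlternatingMap.coe_multilinearMap] at this
    rw [show (∑ r : Fin d → Bool, det (N (fun j => sgn (r j))))
        = ∑ r : Fin d → Bool, (detRowAlternating : (Fin d → ℝ) [⋀^Fin d]→ₗ[ℝ] ℝ)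
          (fun j => fun i => (if i = j then (1:ℝ) else 0) + S i j * sgn (r j)) from
      Finset.sum_congr rfl fun r _ => hdetN _, ← this]
    have hcol : (fun j => ∑ b : Bool, (fun i => (if i = j then (1:ℝ) else 0) + S i j * sgn b))
        = fun j => (2:ℝ) • fun i => if i = j then (1:ℝ) else 0 := by
      funext j i
      simp [hsgn, Fintype.sum_bool, Finset.sum_apply]
      split <;> ring
    rw [hcol]
    have hsmul := (detRowAlternating : (Fin d → ℝ) [⋀^Fin d]→ₗ[ℝ] ℝ).toMultilinearMap.map_smul_univ
      (fun _ : Fin d => (2:ℝ)) (fun j => fun i => if i = j then (1:ℝ) else 0)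
    simp only [AlternatingMap.coe_multilinearMap] at hsmul
    rw [hsmul]
    have hone : (fun j => fun i => if i = j then (1:ℝ) else 0) = (1 : Matrix (Fin d) (Fin d) ℝ) := by
      ext j i; simp [one_apply, eq_comm]
    rw [hone]
    have : (detRowAlternating : (Fin d → ℝ) [⋀^Fin d]→ₗ[ℝ] ℝ)
        ((1 : Matrix (Fin d) (Fin d) ℝ) : Fin d → Fin d → ℝ) = det (1 : Matrix (Fin d) (Fin d) ℝ) := rfl
    rw [this, det_one]
    simp
  -- existence of a sign pattern with nonzero determinant
  have hex : ∃ r : Fin d → Bool, det (N (fun j => sgn (r j))) ≠ 0 := by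
    by_contra h
    push_neg at h
    rw [Finset.sum_congr rfl (fun r _ => h r), Finset.sum_const, smul_zero] at hsum
    have : (0:ℝ) < 2 ^ d := by positivity
    exact this.ne hsum
  obtain ⟨r₁, hr₁⟩ := hex
  obtain ⟨r₀, hr₀⟩ := Finite.exists_max (fun r : Fin d → Bool => |det (N (fun j => sgn (r j)))|)
  set z : Fin d → ℝ := fun j => sgn (r₀ j) with hz
  set B := N z with hB
  have hdetB : det B ≠ 0 := by
    intro h0
    have h1 := hr₀ r₁
    rw [h0, abs_zero] at h1
    exact hr₁ (abs_eq_zero.mp (le_antisymm h1 (abs_nonneg _)))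
  have hBunit : IsUnit B := (isUnit_iff_isUnit_det B).mpr (isUnit_iff_ne_zero.mpr hdetB)
  have hBdetu : IsUnit B.det := isUnit_iff_ne_zero.mpr hdetB
  have hBBi : B * B⁻¹ = 1 := mul_nonsing_inv B hBdetu
  have hBiB : B⁻¹ * B = 1 := nonsing_inv_mul B hBdetu
  set Q := S * diagonal z with hQ
  have hBQ : B = 1 + Q := rfl
  have hzsq : ∀ k, z k * z k = 1 := fun k => by by_cases h : r₀ k <;> simp [hz, hsgn, h]
  have hQtQ : Qᵀ * Q = 1 := by
    rw [hQ, transpose_mul, diagonal_transpose, mul_assoc, ← mul_assoc Sᵀ S, hS, one_mul,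
      diagonal_mul_diagonal]
    rw [show (fun k => z k * z k) = fun _ => (1:ℝ) from funext hzsq]
    exact diagonal_one
  have hQQt : Q * Qᵀ = 1 := mul_eq_one_comm.mp hQtQ
  set A := (2:ℝ) • B⁻¹ - 1 with hA
  have hBQt : B * Qᵀ = 1 + Qᵀ := by rw [hBQ, add_mul, one_mul, hQQt, add_comm]
  have hBiQt : B⁻¹ * (1 + Qᵀ) = Qᵀ := by rw [← hBQt, ← mul_assoc, hBiB, one_mul]
  have hBtinv : (1 + Qᵀ)⁻¹ = 1 - B⁻¹ := inv_eq_left_inv (by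
    rw [sub_mul, one_mul, hBiQt, add_sub_cancel_right])
  have hAT : Aᵀ = -A := by
    rw [hA, transpose_sub, transpose_smul, transpose_one, transpose_nonsing_inv]
    have hBt : Bᵀ = 1 + Qᵀ := by rw [hBQ, transpose_add, transpose_one]
    rw [hBt, hBtinv]
    module
  have h1A : (1 : Matrix (Fin d) (Fin d) ℝ) + A = (2:ℝ) • B⁻¹ := by rw [hA]; module
  have hinv2 : ((1 : Matrix (Fin d) (Fin d) ℝ) + A)⁻¹ = (2⁻¹:ℝ) • B := by
    rw [h1A]
    refine inv_eq_left_inv ?_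
    rw [smul_mul_assoc, mul_smul_comm, hBBi, smul_smul]
    norm_num
  have hfinal : Q = (1 - A) * (1 + A)⁻¹ := by
    rw [hinv2, hA]
    have h2 : (1:Matrix (Fin d) (Fin d) ℝ) - ((2:ℝ) • B⁻¹ - 1) = (2:ℝ) • (1 - B⁻¹) := by module
    rw [h2, smul_mul_assoc, mul_smul_comm, smul_smul]
    rw [sub_mul, one_mul, hBiB]
    rw [show ((2:ℝ) * 2⁻¹) = 1 by norm_num, one_smul, hBQ, add_sub_cancel_left]
  have hskew : ∀ i j, A j i = - A i j := fun i j => by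
    have h3 := congrFun (congrFun hAT i) j
    simpa [transpose_apply, neg_apply] using h3
  have hdiag : ∀ i, A i i = 0 := fun i => by have := hskew i i; linarith
  have hbound : ∀ i j, i ≠ j → |A i j| ≤ 1 := by
    intro i j hij
    set r' : Fin d → Bool := fun k => if k = i ∨ k = j then !(r₀ k) else r₀ k with hr'
    set z' : Fin d → ℝ := fun k => sgn (r' k) with hz'def
    have hz'i : z' i = - z i := by
      rw [hz'def, hz]
      simp only [hr', if_pos (Or.inl rfl)]
      cases r₀ i <;> simp [hsgn]
    have hz'j : z' j = - z j := by
      rw [hz'def, hz]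
      simp only [hr', if_pos (Or.inr rfl)]
      cases r₀ j <;> simp [hsgn]
    have hz'o : ∀ m, m ≠ i → m ≠ j → z' m = z m := by
      intro m h1 h2
      rw [hz'def, hz]
      simp only [hr', h1, h2, if_neg (by tauto : ¬(m = i ∨ m = j))]
    set C := ((1 : Matrix (Fin d) (Fin d) ℝ).updateCol i (fun k => A k i)).updateCol j
      (fun k => A k j) with hC
    have hBA : B * A = (2:ℝ) • 1 - B := by
      rw [hA, mul_sub, mul_smul_comm, hBBi, mul_one]
    have hBcol : ∀ k m, B k m = (if k = m then (1:ℝ) else 0) + S k m * z m := by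
      intro k m
      rw [hB, hNdef]
      simp [Matrix.add_apply, one_apply, mul_diagonal]
    have hNz' : N z' = B * C := by
      ext k m
      rw [mul_apply]
      rcases eq_or_ne m j with rfl | hmj
      · simp only [hC, updateCol_self]
        rw [← mul_apply, hBA, Matrix.sub_apply, Matrix.smul_apply, one_apply, hBcol, hNdef]
        simp only [Matrix.add_apply, one_apply, mul_diagonal, hz'j]
        rcases eq_or_ne k m with rfl | h <;> simp [*] <;> ring
      · rcases eq_or_ne m i with rfl | hmi
        · simp only [hC, updateCol_ne hmj, updateCol_self]
          rw [← mul_apply, hBA, Matrix.sub_apply, Matrix.smul_apply, one_apply, hBcol, hNdef]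
          simp only [Matrix.add_apply, one_apply, mul_diagonal, hz'i]
          rcases eq_or_ne k m with rfl | h <;> simp [*] <;> ring
        · simp only [hC, updateCol_ne hmj, updateCol_ne hmi]
          rw [← mul_apply, mul_one, hBcol, hNdef]
          simp [Matrix.add_apply, one_apply, mul_diagonal, hz'o m hmi hmj]
    have hdetC : det C = A i j * A i j := by
      rw [hC, det_two_updates hij, hdiag i, hdiag j, hskew i j]
      ring
    have hmax := hr₀ r'
    have hNr' : N (fun j => sgn (r' j)) = N z' := rfl
    rw [hNr', hNz', det_mul, hdetC, abs_mul] at hmax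
    have habs : |A i j * A i j| = A i j * A i j := abs_of_nonneg (mul_self_nonneg _)
    rw [habs] at hmax
    have hBpos : 0 < |det B| := abs_pos.mpr hdetB
    have h3 : A i j * A i j ≤ 1 := by
      by_contra hgt
      push_neg at hgt
      nlinarith
    exact abs_le_one_iff_mul_self_le_one.mpr h3
  refine ⟨diagonal z, A, ?_, ?_, hAT, ?_, ?_, ?_⟩
  · intro i
    rw [diagonal_apply_eq]
    by_cases h : r₀ i <;> simp [hz, hsgn, h]
  · intro i j hij
    exact diagonal_apply_ne _ hij
  · intro i j
    rcases eq_or_ne i j with rfl | hij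
    · rw [hdiag]
      constructor <;> norm_num
    · exact abs_le.mp (hbound i j hij)
  · exact hBQ ▸ hBunit
  · exact hfinal
end

section
/- Let A be a d×d real skew-symmetric matrix, Λ a d×d invertible real diagonal matrix, μ, y ∈ ℝᵈ, and set u = Λ⁻¹ (I + A)(I - A)⁻¹ (y - μ). Fix indices i ≠ j and let E = J^{i,j} - J^{j,i}, where J^{i,j} is the matrix with a 1 in position (i,j) and zeros elsewhere. Then the directional derivative at A in the direction E of the map X ↦ μ + (I - X)(I + X)⁻¹ Λ u equals -2 (I + A)⁻¹ (J^{i,j} - J^{j,i}) (I - A)⁻¹ (y - μ). -/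
open Matrix

attribute [local instance] Matrix.linftyOpNormedRing Matrix.linftyOpNormedAlgebra

lemma isUnit_one_add_skew {d : ℕ} {A : Matrix (Fin d) (Fin d) ℝ} (hA : Aᵀ = -A) :
    IsUnit (1 + A) := by
  rw [← Matrix.mulVec_injective_iff_isUnit]
  intro x y hxy
  have hz : (1 + A).mulVec (x - y) = 0 := by
    rw [Matrix.mulVec_sub, hxy, sub_self]
  set z := x - y with hzdef
  have h1 : z + A.mulVec z = 0 := by
    simpa [Matrix.add_mulVec, Matrix.one_mulVec] using hz
  have hskew : z ⬝ᵥ A.mulVec z = 0 := by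
    have h2 : z ⬝ᵥ A.mulVec z = Matrix.vecMul z A ⬝ᵥ z := Matrix.dotProduct_mulVec z A z
    have h3 : Matrix.vecMul z A = Aᵀ.mulVec z := (Matrix.mulVec_transpose A z).symm
    rw [h3, hA] at h2
    have : z ⬝ᵥ A.mulVec z = -(z ⬝ᵥ A.mulVec z) := by
      conv_lhs => rw [h2, Matrix.neg_mulVec, neg_dotProduct, dotProduct_comm]
    linarith
  have hd : z ⬝ᵥ (z + A.mulVec z) = 0 := by rw [h1]; simp
  rw [dotProduct_add, hskew, add_zero] at hd
  have : z = 0 := by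
    rwa [dotProduct_self_eq_zero] at hd
  exact sub_eq_zero.mp this


/-- Directional derivative of the data generating algorithm with respect to the
skew-symmetric parameter: with `u = Λ⁻¹ (I + A)(I - A)⁻¹ (y - μ)` and direction
`E = J^{i,j} - J^{j,i}`, the derivative at `t = 0` of
`t ↦ μ + (I - (A + tE))(I + A + tE)⁻¹ Λ u` equals
`-2 (I + A)⁻¹ (J^{i,j} - J^{j,i}) (I - A)⁻¹ (y - μ)`. -/
theorem dga_deriv_skew_param {d : ℕ} (A Λ : Matrix (Fin d) (Fin d) ℝ)
    (μ y : Fin d → ℝ) (i j : Fin d) (hij : i ≠ j)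
    (hA : Aᵀ = -A) (hΛdiag : Λ.IsDiag) (hΛ : IsUnit Λ)
    (E : Matrix (Fin d) (Fin d) ℝ)
    (hE : E = Matrix.single i j (1 : ℝ) - Matrix.single j i (1 : ℝ))
    (u : Fin d → ℝ)
    (hu : u = (Λ⁻¹ * ((1 + A) * (1 - A)⁻¹)).mulVec (y - μ)) :
    HasDerivAt (fun t : ℝ => μ + ((1 - (A + t • E)) * (1 + A + t • E)⁻¹ * Λ).mulVec u)
      (((-2 : ℝ) • ((1 + A)⁻¹ * E * (1 - A)⁻¹)).mulVec (y - μ)) 0 := by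
  have hU : IsUnit (1 + A) := isUnit_one_add_skew hA
  set B : ℝ → Matrix (Fin d) (Fin d) ℝ := fun t => 1 + A + t • E with hBdef
  -- B is continuous with derivative E at 0, and B 0 = 1 + A
  have hB0 : B 0 = 1 + A := by simp [hBdef]
  have hBderiv : HasDerivAt B E 0 := by
    have h1 : HasDerivAt (fun t : ℝ => t • E) ((1:ℝ) • E) 0 :=
      (hasDerivAt_id (0:ℝ)).smul_const E
    have h2 := h1.const_add (1 + A)
    rw [one_smul] at h2
    exact h2
  -- eventually B t is a unit
  have hev : ∀ᶠ t in nhds (0:ℝ), IsUnit (B t) := by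
    have hBc : Continuous B := by
      apply Continuous.add continuous_const
      exact continuous_id.smul continuous_const
    have hdetc : Continuous fun t => (B t).det := hBc.matrix_det
    have hd0 : (B 0).det ≠ 0 := by
      rw [hB0]
      exact (Matrix.isUnit_iff_isUnit_det _).mp hU |>.ne_zero
    have := (hdetc.continuousAt (x := 0)).eventually_ne hd0
    filter_upwards [this] with t ht
    exact (Matrix.isUnit_iff_isUnit_det _).mpr (isUnit_iff_ne_zero.mpr ht)
  -- the continuous linear map M ↦ M.mulVec u
  let L : Matrix (Fin d) (Fin d) ℝ →L[ℝ] (Fin d → ℝ) :=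
    LinearMap.toContinuousLinearMap
      { toFun := fun M => M.mulVec u
        map_add' := fun M N => Matrix.add_mulVec M N u
        map_smul' := fun c M => Matrix.smul_mulVec c M u }
  -- the smooth surrogate function
  set g : ℝ → (Fin d → ℝ) :=
    fun t => μ + L ((2:ℝ) • Ring.inverse (B t) * Λ - Λ) with hgdef
  -- derivative of t ↦ Ring.inverse (B t)
  have hinv : HasDerivAt (fun t => Ring.inverse (B t))
      (-((1 + A)⁻¹ * E * (1 + A)⁻¹)) 0 := by
    have hx : ((hU.unit : Matrix (Fin d) (Fin d) ℝ)) = B 0 := by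
      rw [hU.unit_spec, hB0]
    have hcomp := (hx ▸ hasFDerivAt_ringInverse (𝕜 := ℝ) hU.unit).comp_hasDerivAt 0 hBderiv
    have hco : ((hU.unit)⁻¹ : (Matrix (Fin d) (Fin d) ℝ)ˣ) = ((1 + A)⁻¹ : Matrix (Fin d) (Fin d) ℝ) := by
      rw [Matrix.coe_units_inv, hU.unit_spec]
    simp [ContinuousLinearMap.mulLeftRight_apply, hco, hB0] at hcomp
    exact hcomp
  -- derivative of g
  have hg : HasDerivAt g (L ((2:ℝ) • -((1 + A)⁻¹ * E * (1 + A)⁻¹) * Λ)) 0 := by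
    have h1 := ((hinv.const_smul (2:ℝ)).mul_const Λ).sub_const Λ
    exact ((L.hasFDerivAt.comp_hasDerivAt 0 h1).const_add μ)
  -- f = g near 0
  have heq : (fun t : ℝ => μ + ((1 - (A + t • E)) * (1 + A + t • E)⁻¹ * Λ).mulVec u)
      =ᶠ[nhds (0:ℝ)] g := by
    filter_upwards [hev] with t ht
    have hinvt : Ring.inverse (B t) = (B t)⁻¹ := (Matrix.nonsing_inv_eq_ringInverse _).symm
    have hBBinv : B t * (B t)⁻¹ = 1 :=
      Matrix.mul_nonsing_inv _ ((Matrix.isUnit_iff_isUnit_det _).mp ht)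
    have hsplit : (1 : Matrix (Fin d) (Fin d) ℝ) - (A + t • E) = (2:ℝ) • (1:Matrix (Fin d) (Fin d) ℝ) - B t := by
      rw [hBdef]; module
    have : (1 - (A + t • E)) * (1 + A + t • E)⁻¹ * Λ
        = (2:ℝ) • Ring.inverse (B t) * Λ - Λ := by
      rw [hsplit, hinvt]
      rw [sub_mul, sub_mul, smul_mul_assoc, one_mul, hBBinv, one_mul]
    rw [hgdef]
    simp only [this]
    rfl
  -- conclude
  have := hg.congr_of_eventuallyEq heq
  convert this using 1
  -- identify the derivative value
  show ((-2 : ℝ) • ((1 + A)⁻¹ * E * (1 - A)⁻¹)).mulVec (y - μ)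
      = ((2:ℝ) • -((1 + A)⁻¹ * E * (1 + A)⁻¹) * Λ).mulVec u
  have hΛΛ : Λ * Λ⁻¹ = 1 := Matrix.mul_nonsing_inv _ ((Matrix.isUnit_iff_isUnit_det _).mp hΛ)
  have hPP : (1 + A)⁻¹ * (1 + A) = 1 :=
    Matrix.nonsing_inv_mul _ ((Matrix.isUnit_iff_isUnit_det _).mp hU)
  rw [hu, Matrix.mulVec_mulVec]
  have key : (2:ℝ) • -((1 + A)⁻¹ * E * (1 + A)⁻¹) * Λ * (Λ⁻¹ * ((1 + A) * (1 - A)⁻¹))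
      = (-2:ℝ) • ((1 + A)⁻¹ * E * (1 - A)⁻¹) := by
    rw [smul_neg, ← neg_smul, smul_mul_assoc, smul_mul_assoc]
    congr 1
    calc (1 + A)⁻¹ * E * (1 + A)⁻¹ * Λ * (Λ⁻¹ * ((1 + A) * (1 - A)⁻¹))
        = (1 + A)⁻¹ * E * ((1 + A)⁻¹ * ((Λ * Λ⁻¹) * ((1 + A) * (1 - A)⁻¹))) := by
          simp only [mul_assoc]
      _ = (1 + A)⁻¹ * E * (1 - A)⁻¹ := by
          rw [hΛΛ, one_mul]
          simp only [mul_assoc]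
          rw [← mul_assoc ((1+A)⁻¹) (1+A) ((1-A)⁻¹), hPP, one_mul]
  rw [key]
  all_goals rfl
end
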